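/- arXiv:2212.10306 — 3 statements merged into one kernel-verified Lean document; each statement's English description precedes it below -/
import Mathlib

section
/- Let D be a positive semidefinite N × N real matrix, let k be a kernel on a set X, and for each variable index m ∈ Fin N and subsequence index i ∈ Fin B let h m i ∈ X be a point. Then the (N·B) × (N·B) matrix K indexed by pairs (m, i), (n, j) with entries K (m,i) (n,j) = D m n · k (h m i) (h n j) is positive semidefinite. -/
/-- A function `k : X → X → ℝ` is a kernel if it is symmetric and every finite
Gram matrix of it is positive semidefinite. -/
def IsKernel {X : Type*} (k : X → X → ℝ) : Prop :=
  (∀ x y : X, k x y = k y x) ∧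
  ∀ (n : ℕ) (x : Fin n → X),
    (Matrix.of fun i j : Fin n => k (x i) (x j)).PosSemidef

theorem multivariateCovariance_posSemidef {X : Type*} {N B : ℕ}
    (D : Matrix (Fin N) (Fin N) ℝ) (hD : D.PosSemidef)
    (k : X → X → ℝ) (hk : IsKernel k) (h : Fin N → Fin B → X) :
    (Matrix.of fun p q : Fin N × Fin B =>
      D p.1 q.1 * k (h p.1 p.2) (h q.1 q.2)).PosSemidef := by
  obtain ⟨hsym, hgram⟩ := hk
  obtain ⟨A, hA⟩ : ∃ A : Matrix (Fin N) (Fin N) ℝ, D = A.conjTranspose * A := by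
    open MatrixOrder in
    obtain ⟨B, hB⟩ := CStarAlgebra.nonneg_iff_eq_star_mul_self.mp hD.nonneg
    exact ⟨B, hB⟩
  -- Gram matrix indexed by pairs is PSD
  have hGpsd : (Matrix.of fun p q : Fin N × Fin B =>
      k (h p.1 p.2) (h q.1 q.2)).PosSemidef := by
    have hG := (hgram (N * B)
      (fun i => h (finProdFinEquiv.symm i).1 (finProdFinEquiv.symm i).2)).submatrix
        finProdFinEquiv
    have heq : ((Matrix.of fun i j : Fin (N * B) =>
        k (h (finProdFinEquiv.symm i).1 (finProdFinEquiv.symm i).2)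
          (h (finProdFinEquiv.symm j).1 (finProdFinEquiv.symm j).2)).submatrix
          finProdFinEquiv finProdFinEquiv)
        = Matrix.of fun p q : Fin N × Fin B => k (h p.1 p.2) (h q.1 q.2) := by
      ext p q
      simp only [Matrix.submatrix_apply, Matrix.of_apply, Equiv.symm_apply_apply]
    rwa [heq] at hG
  have hDapp : ∀ m n : Fin N, D m n = ∑ r, A r m * A r n := by
    intro m n
    rw [hA]
    simp [Matrix.mul_apply, Matrix.conjTranspose_apply]
  rw [Matrix.posSemidef_iff_dotProduct_mulVec]
  constructor
  · ext p q
    simp only [Matrix.conjTranspose_apply, Matrix.of_apply, star_trivial]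
    rw [hsym (h q.1 q.2) (h p.1 p.2)]
    congr 1
    have := congrFun (congrFun hD.1 p.1) q.1
    simpa using this
  · intro x
    have key : dotProduct (star x) ((Matrix.of fun p q : Fin N × Fin B =>
        D p.1 q.1 * k (h p.1 p.2) (h q.1 q.2)).mulVec x)
        = ∑ r, dotProduct (star (fun p : Fin N × Fin B => A r p.1 * x p))
            ((Matrix.of fun p q : Fin N × Fin B => k (h p.1 p.2) (h q.1 q.2)).mulVec
            (fun p : Fin N × Fin B => A r p.1 * x p)) := by
      simp only [dotProduct, Matrix.mulVec, star_trivial, Matrix.of_apply,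
        Finset.mul_sum, Finset.sum_mul, Pi.star_apply]
      conv_rhs => rw [Finset.sum_comm]
      refine Finset.sum_congr rfl fun p _ => ?_
      conv_rhs => rw [Finset.sum_comm]
      refine Finset.sum_congr rfl fun q _ => ?_
      rw [hDapp p.1 q.1, Finset.sum_mul, Finset.sum_mul, Finset.mul_sum]
      exact Finset.sum_congr rfl fun r _ => by ring
    rw [key]
    exact Finset.sum_nonneg fun r _ => (Matrix.posSemidef_iff_dotProduct_mulVec.mp hGpsd).2 _
end

section
/- For every σ_k ∈ ℝ, l ≠ 0 and p ≠ 0, the periodic (PER) function k(x, y) = σ_k² · exp(−2 · sin²(π |x − y| / p) / l²) is a kernel on ℝ: it is symmetric and all its finite Gram matrices are positive semidefinite. -/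
lemma sq_sum_key {m : ℕ} (n : ℕ) (v a b : Fin m → ℝ) :
    0 ≤ ∑ i, ∑ j, v i * v j * (a i * a j + b i * b j) ^ n := by
  have h : ∀ i j : Fin m, v i * v j * (a i * a j + b i * b j) ^ n
      = ∑ k ∈ Finset.range (n+1),
        ((n.choose k : ℝ)) * ((v i * a i ^ k * b i ^ (n - k)) * (v j * a j ^ k * b j ^ (n - k))) := by
    intro i j
    rw [add_pow, Finset.mul_sum]
    refine Finset.sum_congr rfl fun k _ => ?_
    rw [mul_pow, mul_pow]
    ring
  simp_rw [h]
  have h1 : (∑ i, ∑ j, ∑ k ∈ Finset.range (n+1),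
        ((n.choose k : ℝ)) * ((v i * a i ^ k * b i ^ (n - k)) * (v j * a j ^ k * b j ^ (n - k))))
      = ∑ k ∈ Finset.range (n+1),
        ((n.choose k : ℝ)) * (∑ i, v i * a i ^ k * b i ^ (n - k)) ^ 2 := by
    rw [show (∑ i, ∑ j, ∑ k ∈ Finset.range (n+1),
        ((n.choose k : ℝ)) * ((v i * a i ^ k * b i ^ (n - k)) * (v j * a j ^ k * b j ^ (n - k))))
      = ∑ i : Fin m, ∑ k ∈ Finset.range (n+1), ∑ j : Fin m,
        ((n.choose k : ℝ)) * ((v i * a i ^ k * b i ^ (n - k)) * (v j * a j ^ k * b j ^ (n - k)))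
      from Finset.sum_congr rfl fun i _ => Finset.sum_comm]
    rw [Finset.sum_comm]
    refine Finset.sum_congr rfl fun k _ => ?_
    rw [sq, Finset.sum_mul_sum, Finset.mul_sum]
    exact Finset.sum_congr rfl fun i _ => by rw [Finset.mul_sum]
  rw [h1]
  exact Finset.sum_nonneg fun k _ => mul_nonneg (Nat.cast_nonneg _) (sq_nonneg _)

lemma quad_nonneg {m : ℕ} (c : ℝ) (hc : 0 ≤ c) (v a b : Fin m → ℝ) :
    0 ≤ ∑ i, ∑ j, v i * v j * Real.exp (c * (a i * a j + b i * b j)) := by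
  have hexp : ∀ t : ℝ, Real.exp t = ∑' n : ℕ, t ^ n / n.factorial := by
    intro t
    rw [Real.exp_eq_exp_ℝ, NormedSpace.exp_eq_tsum_div]
  simp_rw [hexp, ← tsum_mul_left]
  have hsum : ∀ i j : Fin m, Summable (fun n : ℕ =>
      v i * v j * ((c * (a i * a j + b i * b j)) ^ n / n.factorial)) :=
    fun i j => (Real.summable_pow_div_factorial _).mul_left _
  have e1 : (∑ i, ∑ j, ∑' n : ℕ,
        v i * v j * ((c * (a i * a j + b i * b j)) ^ n / n.factorial))
      = ∑' n : ℕ, ∑ i, ∑ j,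
        v i * v j * ((c * (a i * a j + b i * b j)) ^ n / n.factorial) := by
    rw [Summable.tsum_finsetSum (fun i _ => summable_sum fun j _ => hsum i j)]
    exact Finset.sum_congr rfl fun i _ => (Summable.tsum_finsetSum (fun j _ => hsum i j)).symm
  rw [e1]
  refine tsum_nonneg fun n => ?_
  have e2 : (∑ i, ∑ j, v i * v j * ((c * (a i * a j + b i * b j)) ^ n / n.factorial))
      = (c ^ n / n.factorial) * ∑ i, ∑ j, v i * v j * (a i * a j + b i * b j) ^ n := by
    rw [Finset.mul_sum]
    refine Finset.sum_congr rfl fun i _ => ?_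
    rw [Finset.mul_sum]
    refine Finset.sum_congr rfl fun j _ => ?_
    rw [mul_pow]
    ring
  rw [e2]
  exact mul_nonneg (div_nonneg (pow_nonneg hc n) (Nat.cast_nonneg _)) (sq_sum_key n v a b)


theorem per_isKernel (σk l p : ℝ) (hl : l ≠ 0) (hp : p ≠ 0) :
    IsKernel (fun x y : ℝ =>
      σk ^ 2 * Real.exp (-(2 * Real.sin (Real.pi * |x - y| / p) ^ 2) / l ^ 2)) := by
  set c : ℝ := (l ^ 2)⁻¹ with hc
  have hc0 : 0 ≤ c := inv_nonneg.2 (sq_nonneg l)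
  have key : ∀ x y : ℝ,
      σk ^ 2 * Real.exp (-(2 * Real.sin (Real.pi * |x - y| / p) ^ 2) / l ^ 2)
      = (σk ^ 2 * Real.exp (-c)) *
        Real.exp (c * (Real.cos (2 * Real.pi / p * x) * Real.cos (2 * Real.pi / p * y)
          + Real.sin (2 * Real.pi / p * x) * Real.sin (2 * Real.pi / p * y))) := by
    intro x y
    have habs : Real.sin (Real.pi * |x - y| / p) ^ 2
        = Real.sin (Real.pi * (x - y) / p) ^ 2 := by
      rcases abs_choice (x - y) with h | h
      · rw [h]
      · rw [h, show Real.pi * -(x - y) / p = -(Real.pi * (x - y) / p) by ring,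
          Real.sin_neg, neg_sq]
    rw [habs, Real.sin_sq_eq_half_sub,
      show (2 : ℝ) * (Real.pi * (x - y) / p) = 2 * Real.pi / p * x - 2 * Real.pi / p * y by ring,
      Real.cos_sub]
    rw [show (-(2 * (1 / 2 - (Real.cos (2 * Real.pi / p * x) * Real.cos (2 * Real.pi / p * y)
          + Real.sin (2 * Real.pi / p * x) * Real.sin (2 * Real.pi / p * y)) / 2)) / l ^ 2)
        = -c + c * (Real.cos (2 * Real.pi / p * x) * Real.cos (2 * Real.pi / p * y)
          + Real.sin (2 * Real.pi / p * x) * Real.sin (2 * Real.pi / p * y)) by rw [hc]; ring,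
      Real.exp_add, mul_assoc]
  constructor
  · intro x y
    simp only []
    rw [abs_sub_comm]
  · intro n x
    refine Matrix.PosSemidef.of_dotProduct_mulVec_nonneg ?_ ?_
    · ext i j
      simp only [Matrix.conjTranspose_apply, Matrix.of_apply, star_trivial]
      rw [abs_sub_comm]
    · intro v
      simp only [dotProduct, Matrix.mulVec, Matrix.of_apply, Pi.star_apply,
        star_trivial]
      have hC : 0 ≤ σk ^ 2 * Real.exp (-c) := mul_nonneg (sq_nonneg _) (Real.exp_pos _).le
      simp_rw [key]
      have e : (∑ i, v i * ∑ j, ((σk ^ 2 * Real.exp (-c)) *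
            Real.exp (c * (Real.cos (2 * Real.pi / p * x i) * Real.cos (2 * Real.pi / p * x j)
              + Real.sin (2 * Real.pi / p * x i) * Real.sin (2 * Real.pi / p * x j))) * v j))
          = (σk ^ 2 * Real.exp (-c)) * ∑ i, ∑ j, v i * v j *
            Real.exp (c * (Real.cos (2 * Real.pi / p * x i) * Real.cos (2 * Real.pi / p * x j)
              + Real.sin (2 * Real.pi / p * x i) * Real.sin (2 * Real.pi / p * x j))) := by
        rw [Finset.mul_sum]
        refine Finset.sum_congr rfl fun i _ => ?_
        rw [Finset.mul_sum, Finset.mul_sum]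
        refine Finset.sum_congr rfl fun j _ => ?_
        ring
      rw [e]
      exact mul_nonneg hC (quad_nonneg c hc0 v _ _)
end

section
/- For every σ_k ∈ ℝ and all real a > 0 and l ≠ 0, the rational quadratic (RQ) function k(x, y) = σ_k² · (1 + ‖x − y‖² / (2 a l²))^(−a) is a kernel on any real inner product space E: it is symmetric and all its finite Gram matrices are positive semidefinite. -/
open scoped RealInnerProductSpace
open MeasureTheory Set Finset

section Aux
variable {E : Type*} [NormedAddCommGroup E] [InnerProductSpace ℝ E]

lemma quad_eq {n : ℕ} (M : Matrix (Fin n) (Fin n) ℝ) (v : Fin n → ℝ) :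
    dotProduct (star v) (M.mulVec v) = ∑ i, ∑ j, v i * v j * M i j := by
  simp only [dotProduct, Matrix.mulVec, Pi.star_apply, star_trivial, Finset.mul_sum]
  exact Finset.sum_congr rfl fun i _ => Finset.sum_congr rfl fun j _ => by ring

lemma posSemidef_of_quad {n : ℕ} {M : Matrix (Fin n) (Fin n) ℝ}
    (hsymm : ∀ i j, M i j = M j i)
    (h : ∀ v : Fin n → ℝ, 0 ≤ ∑ i, ∑ j, v i * v j * M i j) : M.PosSemidef := by
  refine Matrix.posSemidef_iff_dotProduct_mulVec.mpr ⟨?_, fun v => ?_⟩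
  · ext i j
    simp [Matrix.conjTranspose_apply, hsymm j i]
  · rw [quad_eq]; exact h v

lemma quad_of_posSemidef {n : ℕ} {M : Matrix (Fin n) (Fin n) ℝ} (h : M.PosSemidef)
    (v : Fin n → ℝ) : 0 ≤ ∑ i, ∑ j, v i * v j * M i j := by
  rw [← quad_eq]; exact (Matrix.posSemidef_iff_dotProduct_mulVec.mp h).2 v

lemma schur_quad {n : ℕ} {A B : Matrix (Fin n) (Fin n) ℝ}
    (hA : A.PosSemidef) (hB : B.PosSemidef) (v : Fin n → ℝ) :
    0 ≤ ∑ i, ∑ j, v i * v j * (A i j * B i j) := by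
  obtain ⟨C, hC⟩ : ∃ C : Matrix (Fin n) (Fin n) ℝ, A = Matrix.conjTranspose C * C := by
    open scoped MatrixOrder in exact CStarAlgebra.nonneg_iff_eq_star_mul_self.mp hA.nonneg
  have hAij : ∀ i j, A i j = ∑ k, C k i * C k j := by
    intro i j
    rw [hC]
    simp [Matrix.mul_apply, Matrix.conjTranspose_apply]
  have key : ∑ i, ∑ j, v i * v j * (A i j * B i j)
      = ∑ k, ∑ i, ∑ j, (v i * C k i) * (v j * C k j) * B i j := by
    calc ∑ i, ∑ j, v i * v j * (A i j * B i j)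
        = ∑ i, ∑ j, ∑ k, (v i * C k i) * (v j * C k j) * B i j := by
          refine Finset.sum_congr rfl fun i _ => Finset.sum_congr rfl fun j _ => ?_
          simp only [hAij i j, Finset.sum_mul, Finset.mul_sum]
          exact Finset.sum_congr rfl fun k _ => by ring
      _ = ∑ i, ∑ k, ∑ j, (v i * C k i) * (v j * C k j) * B i j := by
          exact Finset.sum_congr rfl fun i _ => Finset.sum_comm
      _ = ∑ k, ∑ i, ∑ j, (v i * C k i) * (v j * C k j) * B i j := Finset.sum_comm
  rw [key]
  exact Finset.sum_nonneg fun k _ => quad_of_posSemidef hB _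

lemma gram_posSemidef {n : ℕ} (x : Fin n → E) :
    (Matrix.of fun i j => ⟪x i, x j⟫).PosSemidef := by
  apply posSemidef_of_quad
  · intro i j; exact real_inner_comm _ _
  · intro v
    have key : ⟪∑ i, v i • x i, ∑ j, v j • x j⟫
        = ∑ i, ∑ j, v i * v j * (Matrix.of fun i j => ⟪x i, x j⟫) i j := by
      rw [sum_inner]
      refine Finset.sum_congr rfl fun i _ => ?_
      rw [inner_sum]
      refine Finset.sum_congr rfl fun j _ => ?_
      rw [real_inner_smul_left, real_inner_smul_right, Matrix.of_apply]
      ring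
    rw [← key]
    exact real_inner_self_nonneg

lemma gram_pow_posSemidef {n : ℕ} (x : Fin n → E) (m : ℕ) :
    (Matrix.of fun i j => (⟪x i, x j⟫ : ℝ) ^ m).PosSemidef := by
  induction m with
  | zero =>
    apply posSemidef_of_quad
    · intro i j; simp
    · intro v
      have : ∑ i, ∑ j, v i * v j * (Matrix.of fun i j => (⟪x i, x j⟫ : ℝ) ^ 0) i j
          = (∑ i, v i) ^ 2 := by
        simp only [Matrix.of_apply, pow_zero, mul_one, sq, Finset.sum_mul, Finset.mul_sum]
        exact Finset.sum_congr rfl fun i _ => Finset.sum_congr rfl fun j _ => mul_comm _ _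
      rw [this]
      positivity
  | succ m ih =>
    apply posSemidef_of_quad
    · intro i j
      simp only [Matrix.of_apply]
      rw [real_inner_comm]
    · intro v
      have h := schur_quad (gram_posSemidef x) ih v
      simp only [Matrix.of_apply] at h ⊢
      simpa only [pow_succ, mul_comm] using h

lemma exp_gram_quad {n : ℕ} (x : Fin n → E) {c : ℝ} (hc : 0 ≤ c) (v : Fin n → ℝ) :
    0 ≤ ∑ i, ∑ j, v i * v j * Real.exp (c * ⟪x i, x j⟫) := by
  have hexp : ∀ z : ℝ, Real.exp z = ∑' m : ℕ, z ^ m / (m.factorial : ℝ) := by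
    intro z
    rw [Real.exp_eq_exp_ℝ, NormedSpace.exp_eq_tsum_div]
  have hsum : ∀ (w z : ℝ), Summable fun m : ℕ => w * (z ^ m / (m.factorial : ℝ)) :=
    fun w z => (Real.summable_pow_div_factorial z).mul_left w
  have step1 : ∀ i j : Fin n, v i * v j * Real.exp (c * ⟪x i, x j⟫)
      = ∑' m : ℕ, v i * v j * ((c * ⟪x i, x j⟫) ^ m / (m.factorial : ℝ)) := by
    intro i j; rw [hexp, tsum_mul_left]
  have step2 : ∀ i : Fin n, ∑ j, v i * v j * Real.exp (c * ⟪x i, x j⟫)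
      = ∑' m : ℕ, ∑ j, v i * v j * ((c * ⟪x i, x j⟫) ^ m / (m.factorial : ℝ)) := by
    intro i
    simp only [step1]
    exact (Summable.tsum_finsetSum fun j _ => hsum _ _).symm
  have step3 : ∑ i, ∑ j, v i * v j * Real.exp (c * ⟪x i, x j⟫)
      = ∑' m : ℕ, ∑ i, ∑ j, v i * v j * ((c * ⟪x i, x j⟫) ^ m / (m.factorial : ℝ)) := by
    simp only [step2]
    exact (Summable.tsum_finsetSum fun i _ => summable_sum fun j _ => hsum _ _).symm
  rw [step3]
  apply tsum_nonneg
  intro m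
  have : ∀ i j : Fin n, v i * v j * ((c * ⟪x i, x j⟫) ^ m / (m.factorial : ℝ))
      = (c ^ m / (m.factorial : ℝ)) * (v i * v j * (⟪x i, x j⟫ : ℝ) ^ m) := by
    intro i j; rw [mul_pow]; ring
  simp only [this, ← Finset.mul_sum]
  have hq := quad_of_posSemidef (gram_pow_posSemidef x m) v
  simp only [Matrix.of_apply] at hq
  exact mul_nonneg (by positivity) hq

lemma gaussian_quad {n : ℕ} (x : Fin n → E) {t : ℝ} (ht : 0 ≤ t) (v : Fin n → ℝ) :
    0 ≤ ∑ i, ∑ j, v i * v j * Real.exp (-(t * ‖x i - x j‖ ^ 2)) := by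
  have key : ∀ i j : Fin n, Real.exp (-(t * ‖x i - x j‖ ^ 2))
      = Real.exp (-(t * ‖x i‖ ^ 2)) * Real.exp (-(t * ‖x j‖ ^ 2))
        * Real.exp ((2 * t) * ⟪x i, x j⟫) := by
    intro i j
    rw [← Real.exp_add, ← Real.exp_add]
    congr 1
    rw [norm_sub_sq_real]
    ring
  have h := exp_gram_quad x (c := 2 * t) (by linarith)
    (fun i => v i * Real.exp (-(t * ‖x i‖ ^ 2)))
  have heq : ∑ i, ∑ j, (v i * Real.exp (-(t * ‖x i‖ ^ 2)))
        * (v j * Real.exp (-(t * ‖x j‖ ^ 2))) * Real.exp ((2 * t) * ⟪x i, x j⟫)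
      = ∑ i, ∑ j, v i * v j * Real.exp (-(t * ‖x i - x j‖ ^ 2)) := by
    refine Finset.sum_congr rfl fun i _ => Finset.sum_congr rfl fun j _ => ?_
    rw [key]; ring
  rw [← heq]
  simpa using h

lemma rq_integral_rep {a s : ℝ} (ha : 0 < a) (hs : 0 ≤ s) :
    (1 + s) ^ (-a) =
      (Real.Gamma a)⁻¹ * ∫ t in Ioi (0:ℝ), t ^ (a - 1) * Real.exp (-((1 + s) * t)) := by
  have h1s : (0:ℝ) < 1 + s := by linarith
  rw [Real.integral_rpow_mul_exp_neg_mul_Ioi ha h1s, one_div, Real.inv_rpow h1s.le,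
    ← Real.rpow_neg h1s.le, mul_comm ((1 + s) ^ (-a)) (Real.Gamma a),
    inv_mul_cancel_left₀ (Real.Gamma_pos_of_pos ha).ne']

lemma rq_integrable {a b : ℝ} (ha : 0 < a) (hb : 0 < b) :
    IntegrableOn (fun t : ℝ => t ^ (a - 1) * Real.exp (-(b * t))) (Ioi 0) := by
  have := integrableOn_rpow_mul_exp_neg_mul_rpow (s := a - 1) (p := 1) (b := b)
    (by linarith) zero_lt_one hb
  refine this.congr_fun (fun t ht => ?_) measurableSet_Ioi
  dsimp only
  rw [Real.rpow_one, neg_mul]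

end Aux

theorem rq_isKernel {E : Type*} [NormedAddCommGroup E] [InnerProductSpace ℝ E]
    (σk a l : ℝ) (ha : 0 < a) (hl : l ≠ 0) :
    IsKernel (fun x y : E =>
      σk ^ 2 * (1 + ‖x - y‖ ^ 2 / (2 * a * l ^ 2)) ^ (-a)) := by
  have hc : (0:ℝ) < 2 * a * l ^ 2 := by positivity
  constructor
  · intro x y
    simp only [norm_sub_rev x y]
  · intro n x
    apply posSemidef_of_quad
    · intro i j
      simp only [Matrix.of_apply]
      rw [norm_sub_rev]
    · intro v
      set c : ℝ := 2 * a * l ^ 2 with hcdef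
      have hs0 : ∀ i j : Fin n, 0 ≤ ‖x i - x j‖ ^ 2 / c := fun i j => by positivity
      have key : ∀ i j : Fin n,
          v i * v j * (σk ^ 2 * (1 + ‖x i - x j‖ ^ 2 / c) ^ (-a))
          = σk ^ 2 * (Real.Gamma a)⁻¹ *
            ∫ t in Ioi (0:ℝ), v i * v j *
              (t ^ (a - 1) * Real.exp (-((1 + ‖x i - x j‖ ^ 2 / c) * t))) := by
        intro i j
        rw [rq_integral_rep ha (hs0 i j), MeasureTheory.integral_const_mul]
        ring
      have hint : ∀ i j : Fin n, Integrable
          (fun t : ℝ => v i * v j *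
            (t ^ (a - 1) * Real.exp (-((1 + ‖x i - x j‖ ^ 2 / c) * t))))
          (volume.restrict (Ioi 0)) := by
        intro i j
        exact (rq_integrable ha (by linarith [hs0 i j])).const_mul _
      have swap : ∑ i, ∑ j, (∫ t in Ioi (0:ℝ), v i * v j *
            (t ^ (a - 1) * Real.exp (-((1 + ‖x i - x j‖ ^ 2 / c) * t))))
          = ∫ t in Ioi (0:ℝ), ∑ i, ∑ j, v i * v j *
            (t ^ (a - 1) * Real.exp (-((1 + ‖x i - x j‖ ^ 2 / c) * t))) := by
        have h1 : ∀ i : Fin n, ∑ j, (∫ t in Ioi (0:ℝ), v i * v j *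
              (t ^ (a - 1) * Real.exp (-((1 + ‖x i - x j‖ ^ 2 / c) * t))))
            = ∫ t in Ioi (0:ℝ), ∑ j, v i * v j *
              (t ^ (a - 1) * Real.exp (-((1 + ‖x i - x j‖ ^ 2 / c) * t))) :=
          fun i => (MeasureTheory.integral_finset_sum _ (fun j _ => hint i j)).symm
        simp only [h1]
        exact (MeasureTheory.integral_finset_sum _
          (fun i _ => MeasureTheory.integrable_finset_sum _ (fun j _ => hint i j))).symm
      have hnn : ∀ t ∈ Ioi (0:ℝ), 0 ≤ ∑ i, ∑ j, v i * v j *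
          (t ^ (a - 1) * Real.exp (-((1 + ‖x i - x j‖ ^ 2 / c) * t))) := by
        intro t ht
        have ht0 : (0:ℝ) < t := ht
        have hterm : ∀ i j : Fin n, v i * v j *
            (t ^ (a - 1) * Real.exp (-((1 + ‖x i - x j‖ ^ 2 / c) * t)))
            = (t ^ (a - 1) * Real.exp (-t)) *
              (v i * v j * Real.exp (-(t / c * ‖x i - x j‖ ^ 2))) := by
          intro i j
          have harg : -((1 + ‖x i - x j‖ ^ 2 / c) * t) = -t + -(t / c * ‖x i - x j‖ ^ 2) := by
            field_simp
            ring
          rw [harg, Real.exp_add]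
          ring
        simp only [hterm, ← Finset.mul_sum]
        exact mul_nonneg (by positivity) (gaussian_quad x (by positivity) v)
      calc (0:ℝ) ≤ σk ^ 2 * (Real.Gamma a)⁻¹ *
            ∫ t in Ioi (0:ℝ), ∑ i, ∑ j, v i * v j *
              (t ^ (a - 1) * Real.exp (-((1 + ‖x i - x j‖ ^ 2 / c) * t))) := by
            have hGamma := Real.Gamma_pos_of_pos ha
            exact mul_nonneg (by positivity)
              (MeasureTheory.setIntegral_nonneg measurableSet_Ioi hnn)
        _ = ∑ i, ∑ j, v i * v j *
              (Matrix.of fun i j : Fin n =>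
                σk ^ 2 * (1 + ‖x i - x j‖ ^ 2 / c) ^ (-a)) i j := by
            rw [← swap, Finset.mul_sum]
            refine Finset.sum_congr rfl fun i _ => ?_
            rw [Finset.mul_sum]
            refine Finset.sum_congr rfl fun j _ => ?_
            rw [Matrix.of_apply, key i j]
end
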